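/- Let $v_1,\dots,v_6 \in \mathbb{C}^3$. Then there exists a nonzero homogeneous quadratic form $q$ on $\mathbb{C}^3$ with $q(v_i) = 0$ for all $i = 1,\dots,6$ if and only if $[123][145][246][356] = [124][135][236][456]$. -/

import Mathlib

/-- The bracket `[k₁ k₂ k₃]`: the determinant of the `3 × 3` matrix whose columns are
`v k₁, v k₂, v k₃` in that order. -/
noncomputable def brk3 (v : Fin 6 → Fin 3 → ℂ) (k₁ k₂ k₃ : Fin 6) : ℂ :=
  Matrix.det (Matrix.of fun r c => v (![k₁, k₂, k₃] c) r)

set_option linter.unreachableTactic false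
set_option linter.unnecessarySeqFocus false
set_option linter.unusedTactic false
set_option maxRecDepth 100000

@[simp] private lemma cons_val_five' {α : Type*} {m : ℕ} (x : α) (u : Fin (m+5) → α) :
    Matrix.vecCons x u 5 =
      Matrix.vecHead (Matrix.vecTail (Matrix.vecTail (Matrix.vecTail (Matrix.vecTail u)))) :=
  rfl

set_option maxHeartbeats 1600000 in
private theorem det_fin4_of {R : Type*} [CommRing R] (a00 a01 a02 a03 a10 a11 a12 a13 a20 a21 a22 a23 a30 a31 a32 a33 : R) :
    (!![a00, a01, a02, a03; a10, a11, a12, a13; a20, a21, a22, a23; a30, a31, a32, a33] : Matrix (Fin 4) (Fin 4) R).det = 0 + a00*a11*a22*a33 - a00*a11*a23*a32 - a00*a12*a21*a33 + a00*a12*a23*a31 + a00*a13*a21*a32 - a00*a13*a22*a31 - a01*a10*a22*a33 + a01*a10*a23*a32 + a01*a12*a20*a33 - a01*a12*a23*a30 - a01*a13*a20*a32 + a01*a13*a22*a30 + a02*a10*a21*a33 - a02*a10*a23*a31 - a02*a11*a20*a33 + a02*a11*a23*a30 + a02*a13*a20*a31 - a02*a13*a21*a30 - a03*a10*a21*a32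 + a03*a10*a22*a31 + a03*a11*a20*a32 - a03*a11*a22*a30 - a03*a12*a20*a31 + a03*a12*a21*a30 := by
  have e0 : (!![a00, a01, a02, a03; a10, a11, a12, a13; a20, a21, a22, a23; a30, a31, a32, a33] : Matrix (Fin 4) (Fin 4) R).submatrix Fin.succ (Fin.succAbove 0) = (!![a11, a12, a13; a21, a22, a23; a31, a32, a33] : Matrix (Fin 3) (Fin 3) R) := by
    ext i j; fin_cases i <;> fin_cases j <;> rfl
  have e1 : (!![a00, a01, a02, a03; a10, a11, a12, a13; a20, a21, a22, a23; a30, a31, a32, a33] : Matrix (Fin 4) (Fin 4) R).submatrix Fin.succ (Fin.succAbove 1) = (!![a10, a12, a13; a20, a22, a23; a30, a32, a33] : Matrix (Fin 3) (Fin 3) R) := by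
    ext i j; fin_cases i <;> fin_cases j <;> rfl
  have e2 : (!![a00, a01, a02, a03; a10, a11, a12, a13; a20, a21, a22, a23; a30, a31, a32, a33] : Matrix (Fin 4) (Fin 4) R).submatrix Fin.succ (Fin.succAbove 2) = (!![a10, a11, a13; a20, a21, a23; a30, a31, a33] : Matrix (Fin 3) (Fin 3) R) := by
    ext i j; fin_cases i <;> fin_cases j <;> rfl
  have e3 : (!![a00, a01, a02, a03; a10, a11, a12, a13; a20, a21, a22, a23; a30, a31, a32, a33] : Matrix (Fin 4) (Fin 4) R).submatrix Fin.succ (Fin.succAbove 3) = (!![a10, a11, a12; a20, a21, a22; a30, a31, a32] : Matrix (Fin 3) (Fin 3) R) := by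
    ext i j; fin_cases i <;> fin_cases j <;> rfl
  rw [Matrix.det_succ_row_zero]
  simp only [Fin.sum_univ_succ, Fin.sum_univ_zero, add_zero, show Fin.succ (0:Fin 1) = (1:Fin 2) from rfl, show Fin.succ (0:Fin 2) = (1:Fin 3) from rfl, show Fin.succ (1:Fin 2) = (2:Fin 3) from rfl, show Fin.succ (0:Fin 3) = (1:Fin 4) from rfl, show Fin.succ (1:Fin 3) = (2:Fin 4) from rfl, show Fin.succ (2:Fin 3) = (3:Fin 4) from rfl, show (((0:Fin 4)):ℕ) = (0:ℕ) from rfl, show (((1:Fin 4)):ℕ) = (1:ℕ) from rfl, show (((2:Fin 4)):ℕ) = (2:ℕ) from rfl, show (((3:Fin 4)):ℕ) = (3:ℕ) from rfl,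
    e0, e1, e2, e3,
    Matrix.det_fin_three, Matrix.cons_val', Matrix.cons_val_zero, Matrix.cons_val_one,
    Matrix.head_cons, Matrix.head_fin_const, Matrix.empty_val', Matrix.cons_val_fin_one,
    Matrix.of_apply, Matrix.cons_val_two, Matrix.cons_val_three, Matrix.cons_val_four,
    cons_val_five', Matrix.tail_cons]
  ring

set_option maxHeartbeats 1600000 in
private theorem det_fin5_of {R : Type*} [CommRing R] (a00 a01 a02 a03 a04 a10 a11 a12 a13 a14 a20 a21 a22 a23 a24 a30 a31 a32 a33 a34 a40 a41 a42 a43 a44 : R) :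
    (!![a00, a01, a02, a03, a04; a10, a11, a12, a13, a14; a20, a21, a22, a23, a24; a30, a31, a32, a33, a34; a40, a41, a42, a43, a44] : Matrix (Fin 5) (Fin 5) R).det = 0 + a00*a11*a22*a33*a44 - a00*a11*a22*a34*a43 - a00*a11*a23*a32*a44 + a00*a11*a23*a34*a42 + a00*a11*a24*a32*a43 - a00*a11*a24*a33*a42 - a00*a12*a21*a33*a44 + a00*a12*a21*a34*a43 + a00*a12*a23*a31*a44 - a00*a12*a23*a34*a41 - a00*a12*a24*a31*a43 + a00*a12*a24*a33*a41 + a00*a13*a21*a32*a44 - a00*a13*a21*a34*a42 - a00*a13*a22*a31*a44 + a00*a13*a22*a34*a41 + a00*a13*a24*a31*a42 - a00*a13*a24*a32*a41 - a00*a14*a21*a32*a43 + a00*a14*a21*a33*a42 + a00*a14*a22*a31*a43 - a00*a14*a22*a33*a41 - a00*a14*a23*a31*a42 + a00*a14*a23*a32*a41 - a01*a10*a22*a33*a44 + a01*a10*a22*a34*a43 + a01*a10*a23*a32*a44 - a01*a10*a23*a34*a42 - a01*a10*a24*a32*a43 + a01*a10*a24*a33*a42 + a01*a12*a20*a33*a44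 - a01*a12*a20*a34*a43 - a01*a12*a23*a30*a44 + a01*a12*a23*a34*a40 + a01*a12*a24*a30*a43 - a01*a12*a24*a33*a40 - a01*a13*a20*a32*a44 + a01*a13*a20*a34*a42 + a01*a13*a22*a30*a44 - a01*a13*a22*a34*a40 - a01*a13*a24*a30*a42 + a01*a13*a24*a32*a40 + a01*a14*a20*a32*a43 - a01*a14*a20*a33*a42 - a01*a14*a22*a30*a43 + a01*a14*a22*a33*a40 + a01*a14*a23*a30*a42 - a01*a14*a23*a32*a40 + a02*a10*a21*a33*a44 - a02*a10*a21*a34*a43 - a02*a10*a23*a31*a44 + a02*a10*a23*a34*a41 + a02*a10*a24*a31*a43 - a02*a10*a24*a33*a41 - a02*a11*a20*a33*a44 + a02*a11*a20*a34*a43 + a02*a11*a23*a30*a44 - a02*a11*a23*a34*a40 - a02*a11*a24*a30*a43 + a02*a11*a24*a33*a40 + a02*a13*a20*a31*a44 - a02*a13*a20*a34*a41 - a02*a13*a21*a30*a44 + a02*a13*a21*a34*a40 + a02*a13*a24*a30*a41 - a02*a13*a24*a31*a40 - a02*a14*a20*a31*a43 + a02*a14*a20*a33*a41 + a02*a14*a21*a30*a43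 - a02*a14*a21*a33*a40 - a02*a14*a23*a30*a41 + a02*a14*a23*a31*a40 - a03*a10*a21*a32*a44 + a03*a10*a21*a34*a42 + a03*a10*a22*a31*a44 - a03*a10*a22*a34*a41 - a03*a10*a24*a31*a42 + a03*a10*a24*a32*a41 + a03*a11*a20*a32*a44 - a03*a11*a20*a34*a42 - a03*a11*a22*a30*a44 + a03*a11*a22*a34*a40 + a03*a11*a24*a30*a42 - a03*a11*a24*a32*a40 - a03*a12*a20*a31*a44 + a03*a12*a20*a34*a41 + a03*a12*a21*a30*a44 - a03*a12*a21*a34*a40 - a03*a12*a24*a30*a41 + a03*a12*a24*a31*a40 + a03*a14*a20*a31*a42 - a03*a14*a20*a32*a41 - a03*a14*a21*a30*a42 + a03*a14*a21*a32*a40 + a03*a14*a22*a30*a41 - a03*a14*a22*a31*a40 + a04*a10*a21*a32*a43 - a04*a10*a21*a33*a42 - a04*a10*a22*a31*a43 + a04*a10*a22*a33*a41 + a04*a10*a23*a31*a42 - a04*a10*a23*a32*a41 - a04*a11*a20*a32*a43 + a04*a11*a20*a33*a42 + a04*a11*a22*a30*a43 - a04*a11*a22*a33*a40 - a04*a11*a23*a30*a42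 + a04*a11*a23*a32*a40 + a04*a12*a20*a31*a43 - a04*a12*a20*a33*a41 - a04*a12*a21*a30*a43 + a04*a12*a21*a33*a40 + a04*a12*a23*a30*a41 - a04*a12*a23*a31*a40 - a04*a13*a20*a31*a42 + a04*a13*a20*a32*a41 + a04*a13*a21*a30*a42 - a04*a13*a21*a32*a40 - a04*a13*a22*a30*a41 + a04*a13*a22*a31*a40 := by
  have e0 : (!![a00, a01, a02, a03, a04; a10, a11, a12, a13, a14; a20, a21, a22, a23, a24; a30, a31, a32, a33, a34; a40, a41, a42, a43, a44] : Matrix (Fin 5) (Fin 5) R).submatrix Fin.succ (Fin.succAbove 0) = (!![a11, a12, a13, a14; a21, a22, a23, a24; a31, a32, a33, a34; a41, a42, a43, a44] : Matrix (Fin 4) (Fin 4) R) := by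
    ext i j; fin_cases i <;> fin_cases j <;> rfl
  have e1 : (!![a00, a01, a02, a03, a04; a10, a11, a12, a13, a14; a20, a21, a22, a23, a24; a30, a31, a32, a33, a34; a40, a41, a42, a43, a44] : Matrix (Fin 5) (Fin 5) R).submatrix Fin.succ (Fin.succAbove 1) = (!![a10, a12, a13, a14; a20, a22, a23, a24; a30, a32, a33, a34; a40, a42, a43, a44] : Matrix (Fin 4) (Fin 4) R) := by
    ext i j; fin_cases i <;> fin_cases j <;> rfl
  have e2 : (!![a00, a01, a02, a03, a04; a10, a11, a12, a13, a14; a20, a21, a22, a23, a24; a30, a31, a32, a33, a34; a40, a41, a42, a43, a44] : Matrix (Fin 5) (Fin 5) R).submatrix Fin.succ (Fin.succAbove 2) = (!![a10, a11, a13, a14; a20, a21, a23, a24; a30, a31, a33, a34; a40, a41, a43, a44] : Matrix (Fin 4) (Fin 4) R) := by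
    ext i j; fin_cases i <;> fin_cases j <;> rfl
  have e3 : (!![a00, a01, a02, a03, a04; a10, a11, a12, a13, a14; a20, a21, a22, a23, a24; a30, a31, a32, a33, a34; a40, a41, a42, a43, a44] : Matrix (Fin 5) (Fin 5) R).submatrix Fin.succ (Fin.succAbove 3) = (!![a10, a11, a12, a14; a20, a21, a22, a24; a30, a31, a32, a34; a40, a41, a42, a44] : Matrix (Fin 4) (Fin 4) R) := by
    ext i j; fin_cases i <;> fin_cases j <;> rfl
  have e4 : (!![a00, a01, a02, a03, a04; a10, a11, a12, a13, a14; a20, a21, a22, a23, a24; a30, a31, a32, a33, a34; a40, a41, a42, a43, a44] : Matrix (Fin 5) (Fin 5) R).submatrix Fin.succ (Fin.succAbove 4) = (!![a10, a11, a12, a13; a20, a21, a22, a23; a30, a31, a32, a33; a40, a41, a42, a43] : Matrix (Fin 4) (Fin 4) R) := by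
    ext i j; fin_cases i <;> fin_cases j <;> rfl
  rw [Matrix.det_succ_row_zero]
  simp only [Fin.sum_univ_succ, Fin.sum_univ_zero, add_zero, show Fin.succ (0:Fin 1) = (1:Fin 2) from rfl, show Fin.succ (0:Fin 2) = (1:Fin 3) from rfl, show Fin.succ (1:Fin 2) = (2:Fin 3) from rfl, show Fin.succ (0:Fin 3) = (1:Fin 4) from rfl, show Fin.succ (1:Fin 3) = (2:Fin 4) from rfl, show Fin.succ (2:Fin 3) = (3:Fin 4) from rfl, show Fin.succ (0:Fin 4) = (1:Fin 5) from rfl, show Fin.succ (1:Fin 4) = (2:Fin 5) from rfl, show Fin.succ (2:Fin 4) = (3:Fin 5) from rfl, show Fin.succ (3:Fin 4) = (4:Fin 5) from rfl, show (((0:Fin 5)):ℕ) = (0:ℕ) from rfl, show (((1:Fin 5)):ℕ) = (1:ℕ) from rfl, show (((2:Fin 5)):ℕ) = (2:ℕ) from rfl, show (((3:Fin 5)):ℕ) = (3:ℕ) from rfl, show (((4:Fin 5)):ℕ) = (4:ℕ) from rfl,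
    e0, e1, e2, e3, e4,
    det_fin4_of, Matrix.cons_val', Matrix.cons_val_zero, Matrix.cons_val_one,
    Matrix.head_cons, Matrix.head_fin_const, Matrix.empty_val', Matrix.cons_val_fin_one,
    Matrix.of_apply, Matrix.cons_val_two, Matrix.cons_val_three, Matrix.cons_val_four,
    cons_val_five', Matrix.tail_cons]
  ring

set_option maxHeartbeats 1600000 in
private theorem det_fin6_of {R : Type*} [CommRing R] (a00 a01 a02 a03 a04 a05 a10 a11 a12 a13 a14 a15 a20 a21 a22 a23 a24 a25 a30 a31 a32 a33 a34 a35 a40 a41 a42 a43 a44 a45 a50 a51 a52 a53 a54 a55 : R) :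
    (!![a00, a01, a02, a03, a04, a05; a10, a11, a12, a13, a14, a15; a20, a21, a22, a23, a24, a25; a30, a31, a32, a33, a34, a35; a40, a41, a42, a43, a44, a45; a50, a51, a52, a53, a54, a55] : Matrix (Fin 6) (Fin 6) R).det = 0 + a00*a11*a22*a33*a44*a55 - a00*a11*a22*a33*a45*a54 - a00*a11*a22*a34*a43*a55 + a00*a11*a22*a34*a45*a53 + a00*a11*a22*a35*a43*a54 - a00*a11*a22*a35*a44*a53 - a00*a11*a23*a32*a44*a55 + a00*a11*a23*a32*a45*a54 + a00*a11*a23*a34*a42*a55 - a00*a11*a23*a34*a45*a52 - a00*a11*a23*a35*a42*a54 + a00*a11*a23*a35*a44*a52 + a00*a11*a24*a32*a43*a55 - a00*a11*a24*a32*a45*a53 - a00*a11*a24*a33*a42*a55 + a00*a11*a24*a33*a45*a52 + a00*a11*a24*a35*a42*a53 - a00*a11*a24*a35*a43*a52 - a00*a11*a25*a32*a43*a54 + a00*a11*a25*a32*a44*a53 + a00*a11*a25*a33*a42*a54 - a00*a11*a25*a33*a44*a52 - a00*a11*a25*a34*a42*a53 + a00*a11*a25*a34*a43*a52 - a00*a12*a21*a33*a44*a55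 + a00*a12*a21*a33*a45*a54 + a00*a12*a21*a34*a43*a55 - a00*a12*a21*a34*a45*a53 - a00*a12*a21*a35*a43*a54 + a00*a12*a21*a35*a44*a53 + a00*a12*a23*a31*a44*a55 - a00*a12*a23*a31*a45*a54 - a00*a12*a23*a34*a41*a55 + a00*a12*a23*a34*a45*a51 + a00*a12*a23*a35*a41*a54 - a00*a12*a23*a35*a44*a51 - a00*a12*a24*a31*a43*a55 + a00*a12*a24*a31*a45*a53 + a00*a12*a24*a33*a41*a55 - a00*a12*a24*a33*a45*a51 - a00*a12*a24*a35*a41*a53 + a00*a12*a24*a35*a43*a51 + a00*a12*a25*a31*a43*a54 - a00*a12*a25*a31*a44*a53 - a00*a12*a25*a33*a41*a54 + a00*a12*a25*a33*a44*a51 + a00*a12*a25*a34*a41*a53 - a00*a12*a25*a34*a43*a51 + a00*a13*a21*a32*a44*a55 - a00*a13*a21*a32*a45*a54 - a00*a13*a21*a34*a42*a55 + a00*a13*a21*a34*a45*a52 + a00*a13*a21*a35*a42*a54 - a00*a13*a21*a35*a44*a52 - a00*a13*a22*a31*a44*a55 + a00*a13*a22*a31*a45*a54 + a00*a13*a22*a34*a41*a55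 - a00*a13*a22*a34*a45*a51 - a00*a13*a22*a35*a41*a54 + a00*a13*a22*a35*a44*a51 + a00*a13*a24*a31*a42*a55 - a00*a13*a24*a31*a45*a52 - a00*a13*a24*a32*a41*a55 + a00*a13*a24*a32*a45*a51 + a00*a13*a24*a35*a41*a52 - a00*a13*a24*a35*a42*a51 - a00*a13*a25*a31*a42*a54 + a00*a13*a25*a31*a44*a52 + a00*a13*a25*a32*a41*a54 - a00*a13*a25*a32*a44*a51 - a00*a13*a25*a34*a41*a52 + a00*a13*a25*a34*a42*a51 - a00*a14*a21*a32*a43*a55 + a00*a14*a21*a32*a45*a53 + a00*a14*a21*a33*a42*a55 - a00*a14*a21*a33*a45*a52 - a00*a14*a21*a35*a42*a53 + a00*a14*a21*a35*a43*a52 + a00*a14*a22*a31*a43*a55 - a00*a14*a22*a31*a45*a53 - a00*a14*a22*a33*a41*a55 + a00*a14*a22*a33*a45*a51 + a00*a14*a22*a35*a41*a53 - a00*a14*a22*a35*a43*a51 - a00*a14*a23*a31*a42*a55 + a00*a14*a23*a31*a45*a52 + a00*a14*a23*a32*a41*a55 - a00*a14*a23*a32*a45*a51 - a00*a14*a23*a35*a41*a52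 + a00*a14*a23*a35*a42*a51 + a00*a14*a25*a31*a42*a53 - a00*a14*a25*a31*a43*a52 - a00*a14*a25*a32*a41*a53 + a00*a14*a25*a32*a43*a51 + a00*a14*a25*a33*a41*a52 - a00*a14*a25*a33*a42*a51 + a00*a15*a21*a32*a43*a54 - a00*a15*a21*a32*a44*a53 - a00*a15*a21*a33*a42*a54 + a00*a15*a21*a33*a44*a52 + a00*a15*a21*a34*a42*a53 - a00*a15*a21*a34*a43*a52 - a00*a15*a22*a31*a43*a54 + a00*a15*a22*a31*a44*a53 + a00*a15*a22*a33*a41*a54 - a00*a15*a22*a33*a44*a51 - a00*a15*a22*a34*a41*a53 + a00*a15*a22*a34*a43*a51 + a00*a15*a23*a31*a42*a54 - a00*a15*a23*a31*a44*a52 - a00*a15*a23*a32*a41*a54 + a00*a15*a23*a32*a44*a51 + a00*a15*a23*a34*a41*a52 - a00*a15*a23*a34*a42*a51 - a00*a15*a24*a31*a42*a53 + a00*a15*a24*a31*a43*a52 + a00*a15*a24*a32*a41*a53 - a00*a15*a24*a32*a43*a51 - a00*a15*a24*a33*a41*a52 + a00*a15*a24*a33*a42*a51 - a01*a10*a22*a33*a44*a55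 + a01*a10*a22*a33*a45*a54 + a01*a10*a22*a34*a43*a55 - a01*a10*a22*a34*a45*a53 - a01*a10*a22*a35*a43*a54 + a01*a10*a22*a35*a44*a53 + a01*a10*a23*a32*a44*a55 - a01*a10*a23*a32*a45*a54 - a01*a10*a23*a34*a42*a55 + a01*a10*a23*a34*a45*a52 + a01*a10*a23*a35*a42*a54 - a01*a10*a23*a35*a44*a52 - a01*a10*a24*a32*a43*a55 + a01*a10*a24*a32*a45*a53 + a01*a10*a24*a33*a42*a55 - a01*a10*a24*a33*a45*a52 - a01*a10*a24*a35*a42*a53 + a01*a10*a24*a35*a43*a52 + a01*a10*a25*a32*a43*a54 - a01*a10*a25*a32*a44*a53 - a01*a10*a25*a33*a42*a54 + a01*a10*a25*a33*a44*a52 + a01*a10*a25*a34*a42*a53 - a01*a10*a25*a34*a43*a52 + a01*a12*a20*a33*a44*a55 - a01*a12*a20*a33*a45*a54 - a01*a12*a20*a34*a43*a55 + a01*a12*a20*a34*a45*a53 + a01*a12*a20*a35*a43*a54 - a01*a12*a20*a35*a44*a53 - a01*a12*a23*a30*a44*a55 + a01*a12*a23*a30*a45*a54 + a01*a12*a23*a34*a40*a55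 - a01*a12*a23*a34*a45*a50 - a01*a12*a23*a35*a40*a54 + a01*a12*a23*a35*a44*a50 + a01*a12*a24*a30*a43*a55 - a01*a12*a24*a30*a45*a53 - a01*a12*a24*a33*a40*a55 + a01*a12*a24*a33*a45*a50 + a01*a12*a24*a35*a40*a53 - a01*a12*a24*a35*a43*a50 - a01*a12*a25*a30*a43*a54 + a01*a12*a25*a30*a44*a53 + a01*a12*a25*a33*a40*a54 - a01*a12*a25*a33*a44*a50 - a01*a12*a25*a34*a40*a53 + a01*a12*a25*a34*a43*a50 - a01*a13*a20*a32*a44*a55 + a01*a13*a20*a32*a45*a54 + a01*a13*a20*a34*a42*a55 - a01*a13*a20*a34*a45*a52 - a01*a13*a20*a35*a42*a54 + a01*a13*a20*a35*a44*a52 + a01*a13*a22*a30*a44*a55 - a01*a13*a22*a30*a45*a54 - a01*a13*a22*a34*a40*a55 + a01*a13*a22*a34*a45*a50 + a01*a13*a22*a35*a40*a54 - a01*a13*a22*a35*a44*a50 - a01*a13*a24*a30*a42*a55 + a01*a13*a24*a30*a45*a52 + a01*a13*a24*a32*a40*a55 - a01*a13*a24*a32*a45*a50 - a01*a13*a24*a35*a40*a52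 + a01*a13*a24*a35*a42*a50 + a01*a13*a25*a30*a42*a54 - a01*a13*a25*a30*a44*a52 - a01*a13*a25*a32*a40*a54 + a01*a13*a25*a32*a44*a50 + a01*a13*a25*a34*a40*a52 - a01*a13*a25*a34*a42*a50 + a01*a14*a20*a32*a43*a55 - a01*a14*a20*a32*a45*a53 - a01*a14*a20*a33*a42*a55 + a01*a14*a20*a33*a45*a52 + a01*a14*a20*a35*a42*a53 - a01*a14*a20*a35*a43*a52 - a01*a14*a22*a30*a43*a55 + a01*a14*a22*a30*a45*a53 + a01*a14*a22*a33*a40*a55 - a01*a14*a22*a33*a45*a50 - a01*a14*a22*a35*a40*a53 + a01*a14*a22*a35*a43*a50 + a01*a14*a23*a30*a42*a55 - a01*a14*a23*a30*a45*a52 - a01*a14*a23*a32*a40*a55 + a01*a14*a23*a32*a45*a50 + a01*a14*a23*a35*a40*a52 - a01*a14*a23*a35*a42*a50 - a01*a14*a25*a30*a42*a53 + a01*a14*a25*a30*a43*a52 + a01*a14*a25*a32*a40*a53 - a01*a14*a25*a32*a43*a50 - a01*a14*a25*a33*a40*a52 + a01*a14*a25*a33*a42*a50 - a01*a15*a20*a32*a43*a54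 + a01*a15*a20*a32*a44*a53 + a01*a15*a20*a33*a42*a54 - a01*a15*a20*a33*a44*a52 - a01*a15*a20*a34*a42*a53 + a01*a15*a20*a34*a43*a52 + a01*a15*a22*a30*a43*a54 - a01*a15*a22*a30*a44*a53 - a01*a15*a22*a33*a40*a54 + a01*a15*a22*a33*a44*a50 + a01*a15*a22*a34*a40*a53 - a01*a15*a22*a34*a43*a50 - a01*a15*a23*a30*a42*a54 + a01*a15*a23*a30*a44*a52 + a01*a15*a23*a32*a40*a54 - a01*a15*a23*a32*a44*a50 - a01*a15*a23*a34*a40*a52 + a01*a15*a23*a34*a42*a50 + a01*a15*a24*a30*a42*a53 - a01*a15*a24*a30*a43*a52 - a01*a15*a24*a32*a40*a53 + a01*a15*a24*a32*a43*a50 + a01*a15*a24*a33*a40*a52 - a01*a15*a24*a33*a42*a50 + a02*a10*a21*a33*a44*a55 - a02*a10*a21*a33*a45*a54 - a02*a10*a21*a34*a43*a55 + a02*a10*a21*a34*a45*a53 + a02*a10*a21*a35*a43*a54 - a02*a10*a21*a35*a44*a53 - a02*a10*a23*a31*a44*a55 + a02*a10*a23*a31*a45*a54 + a02*a10*a23*a34*a41*a55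 - a02*a10*a23*a34*a45*a51 - a02*a10*a23*a35*a41*a54 + a02*a10*a23*a35*a44*a51 + a02*a10*a24*a31*a43*a55 - a02*a10*a24*a31*a45*a53 - a02*a10*a24*a33*a41*a55 + a02*a10*a24*a33*a45*a51 + a02*a10*a24*a35*a41*a53 - a02*a10*a24*a35*a43*a51 - a02*a10*a25*a31*a43*a54 + a02*a10*a25*a31*a44*a53 + a02*a10*a25*a33*a41*a54 - a02*a10*a25*a33*a44*a51 - a02*a10*a25*a34*a41*a53 + a02*a10*a25*a34*a43*a51 - a02*a11*a20*a33*a44*a55 + a02*a11*a20*a33*a45*a54 + a02*a11*a20*a34*a43*a55 - a02*a11*a20*a34*a45*a53 - a02*a11*a20*a35*a43*a54 + a02*a11*a20*a35*a44*a53 + a02*a11*a23*a30*a44*a55 - a02*a11*a23*a30*a45*a54 - a02*a11*a23*a34*a40*a55 + a02*a11*a23*a34*a45*a50 + a02*a11*a23*a35*a40*a54 - a02*a11*a23*a35*a44*a50 - a02*a11*a24*a30*a43*a55 + a02*a11*a24*a30*a45*a53 + a02*a11*a24*a33*a40*a55 - a02*a11*a24*a33*a45*a50 - a02*a11*a24*a35*a40*a53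 + a02*a11*a24*a35*a43*a50 + a02*a11*a25*a30*a43*a54 - a02*a11*a25*a30*a44*a53 - a02*a11*a25*a33*a40*a54 + a02*a11*a25*a33*a44*a50 + a02*a11*a25*a34*a40*a53 - a02*a11*a25*a34*a43*a50 + a02*a13*a20*a31*a44*a55 - a02*a13*a20*a31*a45*a54 - a02*a13*a20*a34*a41*a55 + a02*a13*a20*a34*a45*a51 + a02*a13*a20*a35*a41*a54 - a02*a13*a20*a35*a44*a51 - a02*a13*a21*a30*a44*a55 + a02*a13*a21*a30*a45*a54 + a02*a13*a21*a34*a40*a55 - a02*a13*a21*a34*a45*a50 - a02*a13*a21*a35*a40*a54 + a02*a13*a21*a35*a44*a50 + a02*a13*a24*a30*a41*a55 - a02*a13*a24*a30*a45*a51 - a02*a13*a24*a31*a40*a55 + a02*a13*a24*a31*a45*a50 + a02*a13*a24*a35*a40*a51 - a02*a13*a24*a35*a41*a50 - a02*a13*a25*a30*a41*a54 + a02*a13*a25*a30*a44*a51 + a02*a13*a25*a31*a40*a54 - a02*a13*a25*a31*a44*a50 - a02*a13*a25*a34*a40*a51 + a02*a13*a25*a34*a41*a50 - a02*a14*a20*a31*a43*a55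 + a02*a14*a20*a31*a45*a53 + a02*a14*a20*a33*a41*a55 - a02*a14*a20*a33*a45*a51 - a02*a14*a20*a35*a41*a53 + a02*a14*a20*a35*a43*a51 + a02*a14*a21*a30*a43*a55 - a02*a14*a21*a30*a45*a53 - a02*a14*a21*a33*a40*a55 + a02*a14*a21*a33*a45*a50 + a02*a14*a21*a35*a40*a53 - a02*a14*a21*a35*a43*a50 - a02*a14*a23*a30*a41*a55 + a02*a14*a23*a30*a45*a51 + a02*a14*a23*a31*a40*a55 - a02*a14*a23*a31*a45*a50 - a02*a14*a23*a35*a40*a51 + a02*a14*a23*a35*a41*a50 + a02*a14*a25*a30*a41*a53 - a02*a14*a25*a30*a43*a51 - a02*a14*a25*a31*a40*a53 + a02*a14*a25*a31*a43*a50 + a02*a14*a25*a33*a40*a51 - a02*a14*a25*a33*a41*a50 + a02*a15*a20*a31*a43*a54 - a02*a15*a20*a31*a44*a53 - a02*a15*a20*a33*a41*a54 + a02*a15*a20*a33*a44*a51 + a02*a15*a20*a34*a41*a53 - a02*a15*a20*a34*a43*a51 - a02*a15*a21*a30*a43*a54 + a02*a15*a21*a30*a44*a53 + a02*a15*a21*a33*a40*a54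 - a02*a15*a21*a33*a44*a50 - a02*a15*a21*a34*a40*a53 + a02*a15*a21*a34*a43*a50 + a02*a15*a23*a30*a41*a54 - a02*a15*a23*a30*a44*a51 - a02*a15*a23*a31*a40*a54 + a02*a15*a23*a31*a44*a50 + a02*a15*a23*a34*a40*a51 - a02*a15*a23*a34*a41*a50 - a02*a15*a24*a30*a41*a53 + a02*a15*a24*a30*a43*a51 + a02*a15*a24*a31*a40*a53 - a02*a15*a24*a31*a43*a50 - a02*a15*a24*a33*a40*a51 + a02*a15*a24*a33*a41*a50 - a03*a10*a21*a32*a44*a55 + a03*a10*a21*a32*a45*a54 + a03*a10*a21*a34*a42*a55 - a03*a10*a21*a34*a45*a52 - a03*a10*a21*a35*a42*a54 + a03*a10*a21*a35*a44*a52 + a03*a10*a22*a31*a44*a55 - a03*a10*a22*a31*a45*a54 - a03*a10*a22*a34*a41*a55 + a03*a10*a22*a34*a45*a51 + a03*a10*a22*a35*a41*a54 - a03*a10*a22*a35*a44*a51 - a03*a10*a24*a31*a42*a55 + a03*a10*a24*a31*a45*a52 + a03*a10*a24*a32*a41*a55 - a03*a10*a24*a32*a45*a51 - a03*a10*a24*a35*a41*a52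 + a03*a10*a24*a35*a42*a51 + a03*a10*a25*a31*a42*a54 - a03*a10*a25*a31*a44*a52 - a03*a10*a25*a32*a41*a54 + a03*a10*a25*a32*a44*a51 + a03*a10*a25*a34*a41*a52 - a03*a10*a25*a34*a42*a51 + a03*a11*a20*a32*a44*a55 - a03*a11*a20*a32*a45*a54 - a03*a11*a20*a34*a42*a55 + a03*a11*a20*a34*a45*a52 + a03*a11*a20*a35*a42*a54 - a03*a11*a20*a35*a44*a52 - a03*a11*a22*a30*a44*a55 + a03*a11*a22*a30*a45*a54 + a03*a11*a22*a34*a40*a55 - a03*a11*a22*a34*a45*a50 - a03*a11*a22*a35*a40*a54 + a03*a11*a22*a35*a44*a50 + a03*a11*a24*a30*a42*a55 - a03*a11*a24*a30*a45*a52 - a03*a11*a24*a32*a40*a55 + a03*a11*a24*a32*a45*a50 + a03*a11*a24*a35*a40*a52 - a03*a11*a24*a35*a42*a50 - a03*a11*a25*a30*a42*a54 + a03*a11*a25*a30*a44*a52 + a03*a11*a25*a32*a40*a54 - a03*a11*a25*a32*a44*a50 - a03*a11*a25*a34*a40*a52 + a03*a11*a25*a34*a42*a50 - a03*a12*a20*a31*a44*a55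 + a03*a12*a20*a31*a45*a54 + a03*a12*a20*a34*a41*a55 - a03*a12*a20*a34*a45*a51 - a03*a12*a20*a35*a41*a54 + a03*a12*a20*a35*a44*a51 + a03*a12*a21*a30*a44*a55 - a03*a12*a21*a30*a45*a54 - a03*a12*a21*a34*a40*a55 + a03*a12*a21*a34*a45*a50 + a03*a12*a21*a35*a40*a54 - a03*a12*a21*a35*a44*a50 - a03*a12*a24*a30*a41*a55 + a03*a12*a24*a30*a45*a51 + a03*a12*a24*a31*a40*a55 - a03*a12*a24*a31*a45*a50 - a03*a12*a24*a35*a40*a51 + a03*a12*a24*a35*a41*a50 + a03*a12*a25*a30*a41*a54 - a03*a12*a25*a30*a44*a51 - a03*a12*a25*a31*a40*a54 + a03*a12*a25*a31*a44*a50 + a03*a12*a25*a34*a40*a51 - a03*a12*a25*a34*a41*a50 + a03*a14*a20*a31*a42*a55 - a03*a14*a20*a31*a45*a52 - a03*a14*a20*a32*a41*a55 + a03*a14*a20*a32*a45*a51 + a03*a14*a20*a35*a41*a52 - a03*a14*a20*a35*a42*a51 - a03*a14*a21*a30*a42*a55 + a03*a14*a21*a30*a45*a52 + a03*a14*a21*a32*a40*a55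 - a03*a14*a21*a32*a45*a50 - a03*a14*a21*a35*a40*a52 + a03*a14*a21*a35*a42*a50 + a03*a14*a22*a30*a41*a55 - a03*a14*a22*a30*a45*a51 - a03*a14*a22*a31*a40*a55 + a03*a14*a22*a31*a45*a50 + a03*a14*a22*a35*a40*a51 - a03*a14*a22*a35*a41*a50 - a03*a14*a25*a30*a41*a52 + a03*a14*a25*a30*a42*a51 + a03*a14*a25*a31*a40*a52 - a03*a14*a25*a31*a42*a50 - a03*a14*a25*a32*a40*a51 + a03*a14*a25*a32*a41*a50 - a03*a15*a20*a31*a42*a54 + a03*a15*a20*a31*a44*a52 + a03*a15*a20*a32*a41*a54 - a03*a15*a20*a32*a44*a51 - a03*a15*a20*a34*a41*a52 + a03*a15*a20*a34*a42*a51 + a03*a15*a21*a30*a42*a54 - a03*a15*a21*a30*a44*a52 - a03*a15*a21*a32*a40*a54 + a03*a15*a21*a32*a44*a50 + a03*a15*a21*a34*a40*a52 - a03*a15*a21*a34*a42*a50 - a03*a15*a22*a30*a41*a54 + a03*a15*a22*a30*a44*a51 + a03*a15*a22*a31*a40*a54 - a03*a15*a22*a31*a44*a50 - a03*a15*a22*a34*a40*a51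 + a03*a15*a22*a34*a41*a50 + a03*a15*a24*a30*a41*a52 - a03*a15*a24*a30*a42*a51 - a03*a15*a24*a31*a40*a52 + a03*a15*a24*a31*a42*a50 + a03*a15*a24*a32*a40*a51 - a03*a15*a24*a32*a41*a50 + a04*a10*a21*a32*a43*a55 - a04*a10*a21*a32*a45*a53 - a04*a10*a21*a33*a42*a55 + a04*a10*a21*a33*a45*a52 + a04*a10*a21*a35*a42*a53 - a04*a10*a21*a35*a43*a52 - a04*a10*a22*a31*a43*a55 + a04*a10*a22*a31*a45*a53 + a04*a10*a22*a33*a41*a55 - a04*a10*a22*a33*a45*a51 - a04*a10*a22*a35*a41*a53 + a04*a10*a22*a35*a43*a51 + a04*a10*a23*a31*a42*a55 - a04*a10*a23*a31*a45*a52 - a04*a10*a23*a32*a41*a55 + a04*a10*a23*a32*a45*a51 + a04*a10*a23*a35*a41*a52 - a04*a10*a23*a35*a42*a51 - a04*a10*a25*a31*a42*a53 + a04*a10*a25*a31*a43*a52 + a04*a10*a25*a32*a41*a53 - a04*a10*a25*a32*a43*a51 - a04*a10*a25*a33*a41*a52 + a04*a10*a25*a33*a42*a51 - a04*a11*a20*a32*a43*a55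 + a04*a11*a20*a32*a45*a53 + a04*a11*a20*a33*a42*a55 - a04*a11*a20*a33*a45*a52 - a04*a11*a20*a35*a42*a53 + a04*a11*a20*a35*a43*a52 + a04*a11*a22*a30*a43*a55 - a04*a11*a22*a30*a45*a53 - a04*a11*a22*a33*a40*a55 + a04*a11*a22*a33*a45*a50 + a04*a11*a22*a35*a40*a53 - a04*a11*a22*a35*a43*a50 - a04*a11*a23*a30*a42*a55 + a04*a11*a23*a30*a45*a52 + a04*a11*a23*a32*a40*a55 - a04*a11*a23*a32*a45*a50 - a04*a11*a23*a35*a40*a52 + a04*a11*a23*a35*a42*a50 + a04*a11*a25*a30*a42*a53 - a04*a11*a25*a30*a43*a52 - a04*a11*a25*a32*a40*a53 + a04*a11*a25*a32*a43*a50 + a04*a11*a25*a33*a40*a52 - a04*a11*a25*a33*a42*a50 + a04*a12*a20*a31*a43*a55 - a04*a12*a20*a31*a45*a53 - a04*a12*a20*a33*a41*a55 + a04*a12*a20*a33*a45*a51 + a04*a12*a20*a35*a41*a53 - a04*a12*a20*a35*a43*a51 - a04*a12*a21*a30*a43*a55 + a04*a12*a21*a30*a45*a53 + a04*a12*a21*a33*a40*a55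 - a04*a12*a21*a33*a45*a50 - a04*a12*a21*a35*a40*a53 + a04*a12*a21*a35*a43*a50 + a04*a12*a23*a30*a41*a55 - a04*a12*a23*a30*a45*a51 - a04*a12*a23*a31*a40*a55 + a04*a12*a23*a31*a45*a50 + a04*a12*a23*a35*a40*a51 - a04*a12*a23*a35*a41*a50 - a04*a12*a25*a30*a41*a53 + a04*a12*a25*a30*a43*a51 + a04*a12*a25*a31*a40*a53 - a04*a12*a25*a31*a43*a50 - a04*a12*a25*a33*a40*a51 + a04*a12*a25*a33*a41*a50 - a04*a13*a20*a31*a42*a55 + a04*a13*a20*a31*a45*a52 + a04*a13*a20*a32*a41*a55 - a04*a13*a20*a32*a45*a51 - a04*a13*a20*a35*a41*a52 + a04*a13*a20*a35*a42*a51 + a04*a13*a21*a30*a42*a55 - a04*a13*a21*a30*a45*a52 - a04*a13*a21*a32*a40*a55 + a04*a13*a21*a32*a45*a50 + a04*a13*a21*a35*a40*a52 - a04*a13*a21*a35*a42*a50 - a04*a13*a22*a30*a41*a55 + a04*a13*a22*a30*a45*a51 + a04*a13*a22*a31*a40*a55 - a04*a13*a22*a31*a45*a50 - a04*a13*a22*a35*a40*a51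 + a04*a13*a22*a35*a41*a50 + a04*a13*a25*a30*a41*a52 - a04*a13*a25*a30*a42*a51 - a04*a13*a25*a31*a40*a52 + a04*a13*a25*a31*a42*a50 + a04*a13*a25*a32*a40*a51 - a04*a13*a25*a32*a41*a50 + a04*a15*a20*a31*a42*a53 - a04*a15*a20*a31*a43*a52 - a04*a15*a20*a32*a41*a53 + a04*a15*a20*a32*a43*a51 + a04*a15*a20*a33*a41*a52 - a04*a15*a20*a33*a42*a51 - a04*a15*a21*a30*a42*a53 + a04*a15*a21*a30*a43*a52 + a04*a15*a21*a32*a40*a53 - a04*a15*a21*a32*a43*a50 - a04*a15*a21*a33*a40*a52 + a04*a15*a21*a33*a42*a50 + a04*a15*a22*a30*a41*a53 - a04*a15*a22*a30*a43*a51 - a04*a15*a22*a31*a40*a53 + a04*a15*a22*a31*a43*a50 + a04*a15*a22*a33*a40*a51 - a04*a15*a22*a33*a41*a50 - a04*a15*a23*a30*a41*a52 + a04*a15*a23*a30*a42*a51 + a04*a15*a23*a31*a40*a52 - a04*a15*a23*a31*a42*a50 - a04*a15*a23*a32*a40*a51 + a04*a15*a23*a32*a41*a50 - a05*a10*a21*a32*a43*a54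 + a05*a10*a21*a32*a44*a53 + a05*a10*a21*a33*a42*a54 - a05*a10*a21*a33*a44*a52 - a05*a10*a21*a34*a42*a53 + a05*a10*a21*a34*a43*a52 + a05*a10*a22*a31*a43*a54 - a05*a10*a22*a31*a44*a53 - a05*a10*a22*a33*a41*a54 + a05*a10*a22*a33*a44*a51 + a05*a10*a22*a34*a41*a53 - a05*a10*a22*a34*a43*a51 - a05*a10*a23*a31*a42*a54 + a05*a10*a23*a31*a44*a52 + a05*a10*a23*a32*a41*a54 - a05*a10*a23*a32*a44*a51 - a05*a10*a23*a34*a41*a52 + a05*a10*a23*a34*a42*a51 + a05*a10*a24*a31*a42*a53 - a05*a10*a24*a31*a43*a52 - a05*a10*a24*a32*a41*a53 + a05*a10*a24*a32*a43*a51 + a05*a10*a24*a33*a41*a52 - a05*a10*a24*a33*a42*a51 + a05*a11*a20*a32*a43*a54 - a05*a11*a20*a32*a44*a53 - a05*a11*a20*a33*a42*a54 + a05*a11*a20*a33*a44*a52 + a05*a11*a20*a34*a42*a53 - a05*a11*a20*a34*a43*a52 - a05*a11*a22*a30*a43*a54 + a05*a11*a22*a30*a44*a53 + a05*a11*a22*a33*a40*a54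 - a05*a11*a22*a33*a44*a50 - a05*a11*a22*a34*a40*a53 + a05*a11*a22*a34*a43*a50 + a05*a11*a23*a30*a42*a54 - a05*a11*a23*a30*a44*a52 - a05*a11*a23*a32*a40*a54 + a05*a11*a23*a32*a44*a50 + a05*a11*a23*a34*a40*a52 - a05*a11*a23*a34*a42*a50 - a05*a11*a24*a30*a42*a53 + a05*a11*a24*a30*a43*a52 + a05*a11*a24*a32*a40*a53 - a05*a11*a24*a32*a43*a50 - a05*a11*a24*a33*a40*a52 + a05*a11*a24*a33*a42*a50 - a05*a12*a20*a31*a43*a54 + a05*a12*a20*a31*a44*a53 + a05*a12*a20*a33*a41*a54 - a05*a12*a20*a33*a44*a51 - a05*a12*a20*a34*a41*a53 + a05*a12*a20*a34*a43*a51 + a05*a12*a21*a30*a43*a54 - a05*a12*a21*a30*a44*a53 - a05*a12*a21*a33*a40*a54 + a05*a12*a21*a33*a44*a50 + a05*a12*a21*a34*a40*a53 - a05*a12*a21*a34*a43*a50 - a05*a12*a23*a30*a41*a54 + a05*a12*a23*a30*a44*a51 + a05*a12*a23*a31*a40*a54 - a05*a12*a23*a31*a44*a50 - a05*a12*a23*a34*a40*a51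 + a05*a12*a23*a34*a41*a50 + a05*a12*a24*a30*a41*a53 - a05*a12*a24*a30*a43*a51 - a05*a12*a24*a31*a40*a53 + a05*a12*a24*a31*a43*a50 + a05*a12*a24*a33*a40*a51 - a05*a12*a24*a33*a41*a50 + a05*a13*a20*a31*a42*a54 - a05*a13*a20*a31*a44*a52 - a05*a13*a20*a32*a41*a54 + a05*a13*a20*a32*a44*a51 + a05*a13*a20*a34*a41*a52 - a05*a13*a20*a34*a42*a51 - a05*a13*a21*a30*a42*a54 + a05*a13*a21*a30*a44*a52 + a05*a13*a21*a32*a40*a54 - a05*a13*a21*a32*a44*a50 - a05*a13*a21*a34*a40*a52 + a05*a13*a21*a34*a42*a50 + a05*a13*a22*a30*a41*a54 - a05*a13*a22*a30*a44*a51 - a05*a13*a22*a31*a40*a54 + a05*a13*a22*a31*a44*a50 + a05*a13*a22*a34*a40*a51 - a05*a13*a22*a34*a41*a50 - a05*a13*a24*a30*a41*a52 + a05*a13*a24*a30*a42*a51 + a05*a13*a24*a31*a40*a52 - a05*a13*a24*a31*a42*a50 - a05*a13*a24*a32*a40*a51 + a05*a13*a24*a32*a41*a50 - a05*a14*a20*a31*a42*a53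 + a05*a14*a20*a31*a43*a52 + a05*a14*a20*a32*a41*a53 - a05*a14*a20*a32*a43*a51 - a05*a14*a20*a33*a41*a52 + a05*a14*a20*a33*a42*a51 + a05*a14*a21*a30*a42*a53 - a05*a14*a21*a30*a43*a52 - a05*a14*a21*a32*a40*a53 + a05*a14*a21*a32*a43*a50 + a05*a14*a21*a33*a40*a52 - a05*a14*a21*a33*a42*a50 - a05*a14*a22*a30*a41*a53 + a05*a14*a22*a30*a43*a51 + a05*a14*a22*a31*a40*a53 - a05*a14*a22*a31*a43*a50 - a05*a14*a22*a33*a40*a51 + a05*a14*a22*a33*a41*a50 + a05*a14*a23*a30*a41*a52 - a05*a14*a23*a30*a42*a51 - a05*a14*a23*a31*a40*a52 + a05*a14*a23*a31*a42*a50 + a05*a14*a23*a32*a40*a51 - a05*a14*a23*a32*a41*a50 := by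
  have e0 : (!![a00, a01, a02, a03, a04, a05; a10, a11, a12, a13, a14, a15; a20, a21, a22, a23, a24, a25; a30, a31, a32, a33, a34, a35; a40, a41, a42, a43, a44, a45; a50, a51, a52, a53, a54, a55] : Matrix (Fin 6) (Fin 6) R).submatrix Fin.succ (Fin.succAbove 0) = (!![a11, a12, a13, a14, a15; a21, a22, a23, a24, a25; a31, a32, a33, a34, a35; a41, a42, a43, a44, a45; a51, a52, a53, a54, a55] : Matrix (Fin 5) (Fin 5) R) := by
    ext i j; fin_cases i <;> fin_cases j <;> rfl
  have e1 : (!![a00, a01, a02, a03, a04, a05; a10, a11, a12, a13, a14, a15; a20, a21, a22, a23, a24, a25; a30, a31, a32, a33, a34, a35; a40, a41, a42, a43, a44, a45; a50, a51, a52, a53, a54, a55] : Matrix (Fin 6) (Fin 6) R).submatrix Fin.succ (Fin.succAbove 1) = (!![a10, a12, a13, a14, a15; a20, a22, a23, a24, a25; a30, a32, a33, a34, a35; a40, a42, a43, a44, a45; a50, a52, a53, a54, a55] : Matrix (Fin 5) (Fin 5) R) := by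
    ext i j; fin_cases i <;> fin_cases j <;> rfl
  have e2 : (!![a00, a01, a02, a03, a04, a05; a10, a11, a12, a13, a14, a15; a20, a21, a22, a23, a24, a25; a30, a31, a32, a33, a34, a35; a40, a41, a42, a43, a44, a45; a50, a51, a52, a53, a54, a55] : Matrix (Fin 6) (Fin 6) R).submatrix Fin.succ (Fin.succAbove 2) = (!![a10, a11, a13, a14, a15; a20, a21, a23, a24, a25; a30, a31, a33, a34, a35; a40, a41, a43, a44, a45; a50, a51, a53, a54, a55] : Matrix (Fin 5) (Fin 5) R) := by
    ext i j; fin_cases i <;> fin_cases j <;> rfl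
  have e3 : (!![a00, a01, a02, a03, a04, a05; a10, a11, a12, a13, a14, a15; a20, a21, a22, a23, a24, a25; a30, a31, a32, a33, a34, a35; a40, a41, a42, a43, a44, a45; a50, a51, a52, a53, a54, a55] : Matrix (Fin 6) (Fin 6) R).submatrix Fin.succ (Fin.succAbove 3) = (!![a10, a11, a12, a14, a15; a20, a21, a22, a24, a25; a30, a31, a32, a34, a35; a40, a41, a42, a44, a45; a50, a51, a52, a54, a55] : Matrix (Fin 5) (Fin 5) R) := by
    ext i j; fin_cases i <;> fin_cases j <;> rfl
  have e4 : (!![a00, a01, a02, a03, a04, a05; a10, a11, a12, a13, a14, a15; a20, a21, a22, a23, a24, a25; a30, a31, a32, a33, a34, a35; a40, a41, a42, a43, a44, a45; a50, a51, a52, a53, a54, a55] : Matrix (Fin 6) (Fin 6) R).submatrix Fin.succ (Fin.succAbove 4) = (!![a10, a11, a12, a13, a15; a20, a21, a22, a23, a25; a30, a31, a32, a33, a35; a40, a41, a42, a43, a45; a50, a51, a52, a53, a55] : Matrix (Fin 5) (Fin 5) R) := by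
    ext i j; fin_cases i <;> fin_cases j <;> rfl
  have e5 : (!![a00, a01, a02, a03, a04, a05; a10, a11, a12, a13, a14, a15; a20, a21, a22, a23, a24, a25; a30, a31, a32, a33, a34, a35; a40, a41, a42, a43, a44, a45; a50, a51, a52, a53, a54, a55] : Matrix (Fin 6) (Fin 6) R).submatrix Fin.succ (Fin.succAbove 5) = (!![a10, a11, a12, a13, a14; a20, a21, a22, a23, a24; a30, a31, a32, a33, a34; a40, a41, a42, a43, a44; a50, a51, a52, a53, a54] : Matrix (Fin 5) (Fin 5) R) := by
    ext i j; fin_cases i <;> fin_cases j <;> rfl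
  rw [Matrix.det_succ_row_zero]
  simp only [Fin.sum_univ_succ, Fin.sum_univ_zero, add_zero, show Fin.succ (0:Fin 1) = (1:Fin 2) from rfl, show Fin.succ (0:Fin 2) = (1:Fin 3) from rfl, show Fin.succ (1:Fin 2) = (2:Fin 3) from rfl, show Fin.succ (0:Fin 3) = (1:Fin 4) from rfl, show Fin.succ (1:Fin 3) = (2:Fin 4) from rfl, show Fin.succ (2:Fin 3) = (3:Fin 4) from rfl, show Fin.succ (0:Fin 4) = (1:Fin 5) from rfl, show Fin.succ (1:Fin 4) = (2:Fin 5) from rfl, show Fin.succ (2:Fin 4) = (3:Fin 5) from rfl, show Fin.succ (3:Fin 4) = (4:Fin 5) from rfl, show Fin.succ (0:Fin 5) = (1:Fin 6) from rfl, show Fin.succ (1:Fin 5) = (2:Fin 6) from rfl, show Fin.succ (2:Fin 5) = (3:Fin 6) from rfl, show Fin.succ (3:Fin 5) = (4:Fin 6) from rfl, show Fin.succ (4:Fin 5) = (5:Fin 6) from rfl, show (((0:Fin 6)):ℕ) = (0:ℕ) from rfl, show (((1:Fin 6)):ℕ) = (1:ℕ) from rfl, show (((2:Fin 6)):ℕ)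 = (2:ℕ) from rfl, show (((3:Fin 6)):ℕ) = (3:ℕ) from rfl, show (((4:Fin 6)):ℕ) = (4:ℕ) from rfl, show (((5:Fin 6)):ℕ) = (5:ℕ) from rfl,
    e0, e1, e2, e3, e4, e5,
    det_fin5_of, Matrix.cons_val', Matrix.cons_val_zero, Matrix.cons_val_one,
    Matrix.head_cons, Matrix.head_fin_const, Matrix.empty_val', Matrix.cons_val_fin_one,
    Matrix.of_apply, Matrix.cons_val_two, Matrix.cons_val_three, Matrix.cons_val_four,
    cons_val_five', Matrix.tail_cons]
  ring

noncomputable section ConicAux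

private def mon6 : Fin 6 → (Fin 3 →₀ ℕ) :=
  ![Finsupp.single 0 2, Finsupp.single 1 2, Finsupp.single 2 2,
    Finsupp.single 0 1 + Finsupp.single 1 1,
    Finsupp.single 0 1 + Finsupp.single 2 1,
    Finsupp.single 1 1 + Finsupp.single 2 1]

private def Amat (v : Fin 6 → Fin 3 → ℂ) : Matrix (Fin 6) (Fin 6) ℂ :=
  Matrix.of fun k j =>
    ![v k 0 * v k 0, v k 1 * v k 1, v k 2 * v k 2,
      v k 0 * v k 1, v k 0 * v k 2, v k 1 * v k 2] j

private lemma degree3 (d : Fin 3 →₀ ℕ) : d.degree = d 0 + d 1 + d 2 := by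
  rw [Finsupp.degree_apply, Finset.sum_subset (Finset.subset_univ _)
    (by intro x _ hx; simpa using hx), Fin.sum_univ_three]

private lemma mon6_degree (j : Fin 6) : (mon6 j).degree = 2 := by
  fin_cases j <;> simp [degree3, mon6, Finsupp.single_apply]

private lemma mon6_classify (d : Fin 3 →₀ ℕ) (hd : d.degree = 2) : ∃ j, d = mon6 j := by
  rw [degree3] at hd
  have h : (d 0 = 2 ∧ d 1 = 0 ∧ d 2 = 0) ∨ (d 0 = 0 ∧ d 1 = 2 ∧ d 2 = 0) ∨
      (d 0 = 0 ∧ d 1 = 0 ∧ d 2 = 2) ∨ (d 0 = 1 ∧ d 1 = 1 ∧ d 2 = 0) ∨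
      (d 0 = 1 ∧ d 1 = 0 ∧ d 2 = 1) ∨ (d 0 = 0 ∧ d 1 = 1 ∧ d 2 = 1) := by omega
  rcases h with h | h | h | h | h | h
  · exact ⟨0, by ext i; fin_cases i <;> simp [mon6, Finsupp.single_apply] <;> omega⟩
  · exact ⟨1, by ext i; fin_cases i <;> simp [mon6, Finsupp.single_apply] <;> omega⟩
  · exact ⟨2, by ext i; fin_cases i <;> simp [mon6, Finsupp.single_apply] <;> omega⟩
  · exact ⟨3, by ext i; fin_cases i <;> simp [mon6, Finsupp.single_apply] <;> omega⟩
  · exact ⟨4, by ext i; fin_cases i <;> simp [mon6, Finsupp.single_apply] <;> omega⟩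
  · exact ⟨5, by ext i; fin_cases i <;> simp [mon6, Finsupp.single_apply] <;> omega⟩

private lemma mon6_inj : Function.Injective mon6 := by
  intro a b h
  have h0 := DFunLike.congr_fun h 0
  have h1 := DFunLike.congr_fun h 1
  fin_cases a <;> fin_cases b <;>
    first
      | rfl
      | (exfalso; simp [mon6, Finsupp.single_apply] at h0 h1)

private lemma eval_mon6 (v : Fin 6 → Fin 3 → ℂ) (k j : Fin 6) (a : ℂ) :
    MvPolynomial.eval (v k) (MvPolynomial.monomial (mon6 j) a) = a * Amat v k j := by
  rw [MvPolynomial.eval_monomial,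
    Finsupp.prod_fintype _ _ (fun i => pow_zero _), Fin.prod_univ_three]
  fin_cases j <;> (simp [mon6, Amat, Finsupp.single_apply, -mul_eq_mul_left_iff]; try ring)

set_option maxHeartbeats 1600000 in
private lemma detA (v : Fin 6 → Fin 3 → ℂ) :
    (Amat v).det =
      brk3 v 0 1 3 * brk3 v 0 2 4 * brk3 v 1 2 5 * brk3 v 3 4 5 -
        brk3 v 0 1 2 * brk3 v 0 3 4 * brk3 v 1 3 5 * brk3 v 2 4 5 := by
  have hA : Amat v = (!![v 0 0 * v 0 0, v 0 1 * v 0 1, v 0 2 * v 0 2, v 0 0 * v 0 1, v 0 0 * v 0 2, v 0 1 * v 0 2;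
      v 1 0 * v 1 0, v 1 1 * v 1 1, v 1 2 * v 1 2, v 1 0 * v 1 1, v 1 0 * v 1 2, v 1 1 * v 1 2;
      v 2 0 * v 2 0, v 2 1 * v 2 1, v 2 2 * v 2 2, v 2 0 * v 2 1, v 2 0 * v 2 2, v 2 1 * v 2 2;
      v 3 0 * v 3 0, v 3 1 * v 3 1, v 3 2 * v 3 2, v 3 0 * v 3 1, v 3 0 * v 3 2, v 3 1 * v 3 2;
      v 4 0 * v 4 0, v 4 1 * v 4 1, v 4 2 * v 4 2, v 4 0 * v 4 1, v 4 0 * v 4 2, v 4 1 * v 4 2;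
      v 5 0 * v 5 0, v 5 1 * v 5 1, v 5 2 * v 5 2, v 5 0 * v 5 1, v 5 0 * v 5 2, v 5 1 * v 5 2] : Matrix (Fin 6) (Fin 6) ℂ) := by
    ext k j; fin_cases k <;> fin_cases j <;> rfl
  rw [hA, det_fin6_of]
  simp only [brk3, Matrix.det_fin_three, Matrix.of_apply, Matrix.cons_val_zero,
    Matrix.cons_val_one, Matrix.head_cons, Matrix.cons_val_two, Matrix.tail_cons]
  ring

end ConicAux

theorem conic_iff_bracket_equation (v : Fin 6 → Fin 3 → ℂ) :
    (∃ q : MvPolynomial (Fin 3) ℂ, q ≠ 0 ∧ q.IsHomogeneous 2 ∧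
        ∀ k : Fin 6, MvPolynomial.eval (v k) q = 0) ↔
      brk3 v 0 1 2 * brk3 v 0 3 4 * brk3 v 1 3 5 * brk3 v 2 4 5 =
        brk3 v 0 1 3 * brk3 v 0 2 4 * brk3 v 1 2 5 * brk3 v 3 4 5 := by
  have key : (∃ q : MvPolynomial (Fin 3) ℂ, q ≠ 0 ∧ q.IsHomogeneous 2 ∧
      ∀ k : Fin 6, MvPolynomial.eval (v k) q = 0) ↔ (Amat v).det = 0 := by
    rw [← Matrix.exists_mulVec_eq_zero_iff]
    constructor
    · rintro ⟨q, hq0, hhom, hev⟩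
      set c : Fin 6 → ℂ := fun j => MvPolynomial.coeff (mon6 j) q with hc
      have hq : q = ∑ j : Fin 6, MvPolynomial.monomial (mon6 j) (c j) := by
        apply MvPolynomial.ext
        intro d
        rw [MvPolynomial.coeff_sum]
        by_cases hd : d.degree = 2
        · obtain ⟨j, rfl⟩ := mon6_classify d hd
          simp [MvPolynomial.coeff_monomial, mon6_inj.eq_iff, hc]
        · rw [hhom.coeff_eq_zero hd]
          refine (Finset.sum_eq_zero fun j _ => ?_).symm
          rw [MvPolynomial.coeff_monomial, if_neg]
          intro h; exact hd (h ▸ mon6_degree j)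
      refine ⟨c, ?_, ?_⟩
      · intro hc0
        apply hq0
        rw [hq, hc0]
        simp
      · funext k
        have h := hev k
        rw [hq] at h
        simp only [map_sum, eval_mon6] at h
        simpa [Matrix.mulVec, dotProduct, mul_comm] using h
    · rintro ⟨c, hc0, hc⟩
      refine ⟨∑ j : Fin 6, MvPolynomial.monomial (mon6 j) (c j), ?_, ?_, ?_⟩
      · intro h
        obtain ⟨j, hj⟩ := Function.ne_iff.mp hc0
        apply hj
        have h2 := congrArg (MvPolynomial.coeff (mon6 j)) h
        rw [MvPolynomial.coeff_sum] at h2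
        simpa [MvPolynomial.coeff_monomial, mon6_inj.eq_iff] using h2
      · exact MvPolynomial.IsHomogeneous.sum _ _ _ fun j _ =>
          MvPolynomial.isHomogeneous_monomial _ (mon6_degree j)
      · intro k
        have h := congrFun hc k
        simp only [map_sum, eval_mon6]
        simpa [Matrix.mulVec, dotProduct, mul_comm] using h
  rw [key, detA, sub_eq_zero]
  exact eq_comm
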